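/- Let H be a complex Hilbert space, D ⊆ H, M : D → H a map, N : H → H a continuous linear map, and λ > 0. Assume I + λN : H → H is bijective with inverse R. If p ∈ D and w ∈ H satisfy w = p + λ • M p and w = (I − λN)(R (p − λ • M p)), then M p + N p = 0. -/
import Mathlib


/-- Conversely, a fixed point of the Peaceman–Rachford map with `w = p + λ M p`
yields a solution of `M p + N p = 0`. -/
theorem stmt5 {H : Type*} [NormedAddCommGroup H] [InnerProductSpace ℂ H] [CompleteSpace H]
    (D : Set H) (M : H → H) (N : H →L[ℂ] H) (l : ℝ) (hl : 0 < l)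
    (hbij : Function.Bijective (fun x : H => x + l • N x))
    (R : H → H) (hR : ∀ y : H, R y + l • N (R y) = y)
    (hRl : ∀ x : H, R (x + l • N x) = x)
    (p : H) (hp : p ∈ D) (w : H)
    (hw : w = p + l • M p)
    (hfix : w = R (p - l • M p) - l • N (R (p - l • M p))) :
    M p + N p = 0 := by
  set u := R (p - l • M p) with hu
  have h1 := hR (p - l • M p)
  rw [← hu] at h1
  have h2 : u - l • N u = p + l • M p := by rw [← hfix, hw]
  have h3 : u = p := by
    have h5 : (2 : ℝ) • u = (2 : ℝ) • p := by
      linear_combination (norm := module) h1 + h2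
    exact smul_right_injective H two_ne_zero h5
  rw [h3] at h1
  have h7 : l • (M p + N p) = 0 := by
    linear_combination (norm := module) h1
  rcases smul_eq_zero.mp h7 with h | h
  · exact absurd h (ne_of_gt hl)
  · exact h
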